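/- Let G be a finite edge-labeled directed graph with edge set E ⊆ V × A × V, and let 𝒢 = (N, A, R) be a context-free grammar in norm form. Define Θ as the least set of triples (v, a, b) ∈ N × V × V closed under: (i) (v, a, a) ∈ Θ whenever a ∈ V and v → ε ∈ R; (ii) (v, a, b) ∈ Θ whenever (a, l, b) ∈ E and v → l ∈ R; (iii) if (u, a, c) ∈ Θ and (w, c, b) ∈ Θ and v → uw ∈ R then (v, a, b) ∈ Θ. Then (v, a, b) ∈ Θ if and only if there exists a path from a to b in the graph whose label string belongs to L(𝒢_v). -/

import Mathlib

inductive GSym (N A : Type) : Type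
  | nt : N → GSym N A
  | tm : A → GSym N A

structure CFG (N A : Type) : Type where
  rules : Set (N × List (GSym N A))

def CFG.Step {N A : Type} (G : CFG N A) (s t : List (GSym N A)) : Prop :=
  ∃ (x y : List (GSym N A)) (v : N) (w : List (GSym N A)),
    (v, w) ∈ G.rules ∧ s = x ++ GSym.nt v :: y ∧ t = x ++ w ++ y

def CFG.Derives {N A : Type} (G : CFG N A) : List (GSym N A) → List (GSym N A) → Prop :=
  Relation.ReflTransGen G.Step

def CFG.Lang {N A : Type} (G : CFG N A) (v : N) : Set (List A) :=
  {s | G.Derives [GSym.nt v] (s.map GSym.tm)}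

/-- A path from `a` to `b` in an edge-labeled directed graph `E`, with the given
label string. -/
inductive PathLabel {V A : Type} (E : Set (V × A × V)) : V → List A → V → Prop
  | nil (a : V) : PathLabel E a [] a
  | cons {a c b : V} {l : A} {ls : List A} :
      (a, l, c) ∈ E → PathLabel E c ls b → PathLabel E a (l :: ls) b

/-- The context-free relation of non-terminal `v` on graph `E`: pairs connected by a
path whose label string lies in `L(G_v)`. -/
def RelCF {V A N : Type} (G : CFG N A) (E : Set (V × A × V)) (v : N) : Set (V × V) :=
  {p | ∃ ls ∈ G.Lang v, PathLabel E p.1 ls p.2}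

/-- A grammar is in norm form if every rule is of the form v → uw, v → l, or v → ε. -/
def CFG.NormForm {N A : Type} (G : CFG N A) : Prop :=
  ∀ r ∈ G.rules, (∃ u w : N, r.2 = [GSym.nt u, GSym.nt w]) ∨
    (∃ a : A, r.2 = [GSym.tm a]) ∨ r.2 = []

/-- The least set Θ of triples closed under the three rules of the conjunctive
context-free recognizer. -/
inductive Theta {V A N : Type} (E : Set (V × A × V)) (G : CFG N A) : N → V → V → Prop
  | eps {v : N} (a : V) : (v, ([] : List (GSym N A))) ∈ G.rules → Theta E G v a a
  | tm {v : N} {a b : V} {l : A} :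
      (a, l, b) ∈ E → (v, [GSym.tm l]) ∈ G.rules → Theta E G v a b
  | comp {u w v : N} {a c b : V} :
      Theta E G u a c → Theta E G w c b → (v, [GSym.nt u, GSym.nt w]) ∈ G.rules →
      Theta E G v a b

section Aux

variable {V A N : Type}

lemma step_append_left {G : CFG N A} {s t : List (GSym N A)} (h : G.Step s t)
    (u : List (GSym N A)) : G.Step (s ++ u) (t ++ u) := by
  obtain ⟨x, y, v, w, hr, hs, ht⟩ := h
  exact ⟨x, y ++ u, v, w, hr, by simp [hs], by simp [ht]⟩

lemma step_append_right {G : CFG N A} {s t : List (GSym N A)} (h : G.Step s t)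
    (u : List (GSym N A)) : G.Step (u ++ s) (u ++ t) := by
  obtain ⟨x, y, v, w, hr, hs, ht⟩ := h
  exact ⟨u ++ x, y, v, w, hr, by simp [hs], by simp [ht]⟩

lemma derives_append_left {G : CFG N A} {s t : List (GSym N A)} (h : G.Derives s t)
    (u : List (GSym N A)) : G.Derives (s ++ u) (t ++ u) := by
  induction h with
  | refl => exact Relation.ReflTransGen.refl
  | tail _ hst ih => exact ih.tail (step_append_left hst u)

lemma derives_append_right {G : CFG N A} {s t : List (GSym N A)} (h : G.Derives s t)
    (u : List (GSym N A)) : G.Derives (u ++ s) (u ++ t) := by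
  induction h with
  | refl => exact Relation.ReflTransGen.refl
  | tail _ hst ih => exact ih.tail (step_append_right hst u)

lemma derives_append {G : CFG N A} {s t s' t' : List (GSym N A)}
    (h : G.Derives s t) (h' : G.Derives s' t') : G.Derives (s ++ s') (t ++ t') :=
  (derives_append_left h s').trans (derives_append_right h' t)

lemma pathLabel_append {E : Set (V × A × V)} {a c b : V} {l1 l2 : List A}
    (h1 : PathLabel E a l1 c) (h2 : PathLabel E c l2 b) :
    PathLabel E a (l1 ++ l2) b := by
  induction h1 with
  | nil => exact h2
  | cons he _ ih => exact PathLabel.cons he (ih h2)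

lemma pathLabel_split {E : Set (V × A × V)} : ∀ {l1 l2 : List A} {a b : V},
    PathLabel E a (l1 ++ l2) b → ∃ c, PathLabel E a l1 c ∧ PathLabel E c l2 b := by
  intro l1
  induction l1 with
  | nil => exact fun h => ⟨_, PathLabel.nil _, h⟩
  | cons l ls ih =>
    intro l2 a b h
    cases h with
    | cons he hp =>
      obtain ⟨c, h1, h2⟩ := ih hp
      exact ⟨c, PathLabel.cons he h1, h2⟩

/-- Derivations indexed by length. -/
inductive DerN (G : CFG N A) : ℕ → List (GSym N A) → List (GSym N A) → Prop
  | refl (s : List (GSym N A)) : DerN G 0 s s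
  | head {n : ℕ} {s t u : List (GSym N A)} :
      G.Step s t → DerN G n t u → DerN G (n + 1) s u

lemma derN_trans {G : CFG N A} {m n : ℕ} {s t u : List (GSym N A)}
    (h1 : DerN G m s t) (h2 : DerN G n t u) : DerN G (m + n) s u := by
  induction h1 with
  | refl => simpa using h2
  | head hst _ ih =>
    have := DerN.head hst (ih h2)
    convert this using 1
    omega

lemma derives_iff_derN {G : CFG N A} {s t : List (GSym N A)} :
    G.Derives s t ↔ ∃ n, DerN G n s t := by
  constructor
  · intro h
    induction h with
    | refl => exact ⟨0, DerN.refl s⟩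
    | tail _ hst ih =>
      obtain ⟨n, hn⟩ := ih
      exact ⟨n + 1, derN_trans hn (DerN.head hst (DerN.refl _))⟩
  · rintro ⟨n, hn⟩
    induction hn with
    | refl => exact Relation.ReflTransGen.refl
    | head hst _ ih => exact Relation.ReflTransGen.head hst ih

lemma no_step_tm {G : CFG N A} {ls : List A} {t : List (GSym N A)} :
    ¬ G.Step (ls.map GSym.tm) t := by
  rintro ⟨x, y, v, w, hr, hs, ht⟩
  have hmem : GSym.nt v ∈ ls.map (GSym.tm : A → GSym N A) := by
    rw [hs]; simp
  obtain ⟨a, _, h⟩ := List.mem_map.mp hmem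
  cases h

lemma derN_tm {G : CFG N A} {n : ℕ} {ls : List A} {t : List (GSym N A)}
    (h : DerN G n (ls.map GSym.tm) t) : t = ls.map GSym.tm := by
  cases h with
  | refl => rfl
  | head hst _ => exact absurd hst no_step_tm

lemma derN_zero {G : CFG N A} {s t : List (GSym N A)} (h : DerN G 0 s t) : s = t := by
  cases h; rfl

lemma derN_succ {G : CFG N A} {n : ℕ} {s t : List (GSym N A)} (h : DerN G (n + 1) s t) :
    ∃ u, G.Step s u ∧ DerN G n u t := by
  cases h with
  | head hst hd => exact ⟨_, hst, hd⟩

lemma derN_split {G : CFG N A} : ∀ {n : ℕ} {x y : List (GSym N A)} {ls : List A},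
    DerN G n (x ++ y) (ls.map GSym.tm) →
    ∃ n1 n2 ls1 ls2, n1 + n2 ≤ n ∧ ls = ls1 ++ ls2 ∧
      DerN G n1 x (ls1.map GSym.tm) ∧ DerN G n2 y (ls2.map GSym.tm) := by
  intro n
  induction n with
  | zero =>
    intro x y ls h
    have heq := derN_zero h
    · refine ⟨0, 0, ls.take x.length, ls.drop x.length, le_refl _,
        (List.take_append_drop _ _).symm, ?_, ?_⟩
      · have hx : x = (ls.take x.length).map GSym.tm := by
          have h2 := congrArg (List.take x.length) heq
          simpa [List.map_take] using h2
        rw [← hx]; exact DerN.refl x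
      · have hy : y = (ls.drop x.length).map GSym.tm := by
          have h2 := congrArg (List.drop x.length) heq
          simpa [List.map_drop] using h2
        rw [← hy]; exact DerN.refl y
  | succ n ih =>
    intro x y ls h
    cases h with
    | head hst hd =>
      obtain ⟨x', y', v, w, hr, heq, ht⟩ := hst
      subst ht
      rcases List.append_eq_append_iff.mp heq with ⟨a', hx', hy⟩ | ⟨c', hx, hy'⟩
      · -- x' = x ++ a', y = a' ++ nt v :: y'
        subst hx' hy
        have hd' : DerN G n (x ++ (a' ++ w ++ y')) (ls.map GSym.tm) := by
          have heq2 : (x ++ a') ++ w ++ y' = x ++ (a' ++ w ++ y') := by simp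
          rwa [heq2] at hd
        obtain ⟨n1, n2, ls1, ls2, hle, hls, h1, h2⟩ := ih hd'
        refine ⟨n1, n2 + 1, ls1, ls2, by omega, hls, h1, ?_⟩
        exact DerN.head ⟨a', y', v, w, hr, rfl, rfl⟩ h2
      · cases c' with
        | nil =>
          simp only [List.append_nil] at hx
          simp only [List.nil_append] at hy'
          subst hx
          have hd' : DerN G n (x ++ (w ++ y')) (ls.map GSym.tm) := by
            have heq2 : x ++ w ++ y' = x ++ (w ++ y') := by simp
            rwa [heq2] at hd
          obtain ⟨n1, n2, ls1, ls2, hle, hls, h1, h2⟩ := ih hd'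
          refine ⟨n1, n2 + 1, ls1, ls2, by omega, hls, h1, ?_⟩
          exact DerN.head ⟨[], y', v, w, hr, by simp [← hy'], by simp⟩ h2
        | cons d c'' =>
          rw [List.cons_append] at hy'
          injection hy' with hd1 hy2
          subst hd1 hy2 hx
          have hd' : DerN G n ((x' ++ w ++ c'') ++ y) (ls.map GSym.tm) := by
            have heq2 : x' ++ w ++ (c'' ++ y) = (x' ++ w ++ c'') ++ y := by simp
            rwa [heq2] at hd
          obtain ⟨n1, n2, ls1, ls2, hle, hls, h1, h2⟩ := ih hd'
          refine ⟨n1 + 1, n2, ls1, ls2, by omega, hls, ?_, h2⟩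
          exact DerN.head ⟨x', c'', v, w, hr, rfl, rfl⟩ h1

lemma theta_of_derN {E : Set (V × A × V)} {G : CFG N A} (hnf : G.NormForm) :
    ∀ n : ℕ, ∀ {v : N} {ls : List A} {a b : V},
      DerN G n [GSym.nt v] (ls.map GSym.tm) → PathLabel E a ls b → Theta E G v a b := by
  intro n
  induction n using Nat.strong_induction_on with
  | _ n ih =>
    intro v ls a b hd hp
    match n, hd with
    | 0, hd =>
      have heq := derN_zero hd
      cases ls with
      | nil => exact absurd heq (by simp)
      | cons l ls' => simp at heq
    | n' + 1, hd =>
      obtain ⟨t, hst, hd'⟩ := derN_succ hd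
      obtain ⟨x, y, v', w, hr, heq, ht⟩ := hst
      have hx : x = [] ∧ v' = v ∧ y = [] := by
        cases x with
        | nil =>
          simp only [List.nil_append, List.cons.injEq] at heq
          exact ⟨rfl, (GSym.nt.injEq _ _ ▸ heq.1).symm, heq.2.symm⟩
        | cons d x' =>
          simp only [List.cons_append, List.cons.injEq] at heq
          exact absurd heq.2.symm (by simp)
      obtain ⟨hx0, hv0, hy0⟩ := hx
      subst hx0 hv0 hy0 ht
      rcases hnf _ hr with ⟨u, w', hw⟩ | ⟨l, hw⟩ | hw <;> simp only at hw <;> subst hw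
      · -- binary rule
        have hd2 : DerN G n' ([GSym.nt u] ++ [GSym.nt w']) (ls.map GSym.tm) := by
          simpa using hd'
        obtain ⟨n1, n2, ls1, ls2, hle, hls, h1, h2⟩ := derN_split hd2
        subst hls
        obtain ⟨c, hp1, hp2⟩ := pathLabel_split hp
        exact Theta.comp (ih n1 (by omega) h1 hp1) (ih n2 (by omega) h2 hp2) hr
      · -- terminal rule
        have hd2 : DerN G n' (([l] : List A).map GSym.tm) (ls.map GSym.tm) := by
          simpa using hd'
        have hls : ls.map (GSym.tm : A → GSym N A) = [GSym.tm l] := by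
          simpa using derN_tm hd2
        have hls2 : ls = [l] := by
          cases ls with
          | nil => simp at hls
          | cons l' ls' =>
            simp only [List.map_cons, List.cons.injEq] at hls
            obtain ⟨h1, h2⟩ := hls
            cases ls' with
            | nil => simp [GSym.tm.injEq _ _ ▸ h1]
            | cons _ _ => simp at h2
        subst hls2
        cases hp with
        | cons he hp' =>
          cases hp'
          exact Theta.tm he hr
      · -- epsilon rule
        have hd2 : DerN G n' (([] : List A).map GSym.tm) (ls.map GSym.tm) := by
          simpa using hd'
        have hls : ls = [] := by
          have := derN_tm hd2
          cases ls with
          | nil => rfl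
          | cons _ _ => simp at this
        subst hls
        cases hp
        exact Theta.eps a hr

end Aux

/-- for a grammar in norm form, (v, a, b) ∈ Θ iff there is a path from a
to b whose label string belongs to L(𝒢_v). -/
theorem theta_correct {V A N : Type} (E : Set (V × A × V)) (G : CFG N A)
    (hnf : G.NormForm) (v : N) (a b : V) :
    Theta E G v a b ↔ ∃ ls ∈ G.Lang v, PathLabel E a ls b := by
  constructor
  · intro h
    induction h with
    | eps a hr =>
      exact ⟨[], Relation.ReflTransGen.single ⟨[], [], _, [], hr, rfl, rfl⟩,
        PathLabel.nil a⟩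
    | tm he hr =>
      rename_i v' a' b' l
      refine ⟨[l], ?_, PathLabel.cons he (PathLabel.nil _)⟩
      exact Relation.ReflTransGen.single ⟨[], [], v', [GSym.tm l], hr, rfl, rfl⟩
    | comp _ _ hr ih1 ih2 =>
      rename_i u w v' a' c' b' _ _
      obtain ⟨ls1, hl1, hp1⟩ := ih1
      obtain ⟨ls2, hl2, hp2⟩ := ih2
      refine ⟨ls1 ++ ls2, ?_, pathLabel_append hp1 hp2⟩
      have hstep : G.Derives [GSym.nt v'] ([GSym.nt u] ++ [GSym.nt w]) :=
        Relation.ReflTransGen.single ⟨[], [], v', [GSym.nt u, GSym.nt w], hr, rfl, rfl⟩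
      have happ := derives_append hl1 hl2
      have : G.Derives [GSym.nt v'] ((ls1 ++ ls2).map GSym.tm) := by
        rw [List.map_append]
        exact hstep.trans happ
      exact this
  · rintro ⟨ls, hl, hp⟩
    obtain ⟨n, hn⟩ := derives_iff_derN.mp hl
    exact theta_of_derN hnf n hn hp
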